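/- Let q be a prime power, w an odd prime with rad(n) | q^w - 1 for a positive integer n with 8 | n and q ≡ 3 (mod 4). Then gcd(n/2, q^w + 1) = gcd(n/2, q+1) = 2^r where r = min(v₂(n/2), v₂(q+1)). -/
import Mathlib

/-- For odd `q` and odd `w`, the 2-adic valuation of `q^w + 1` equals that of `q + 1`. -/
lemma two_val_pow_add_one {q w : ℕ} (hq : q % 2 = 1) (hw : Odd w) :
    (q ^ w + 1).factorization 2 = (q + 1).factorization 2 := by
  have hdvd : q + 1 ∣ q ^ w + 1 := by
    simpa using Odd.nat_add_dvd_pow_add_pow q 1 hw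
  obtain ⟨c, hc⟩ := hdvd
  -- identify c with the alternating geometric sum over ℤ
  have hgeom := geom_sum₂_mul (q : ℤ) (-1) w
  rw [Odd.neg_pow hw, sub_neg_eq_add, sub_neg_eq_add, one_pow] at hgeom
  have hcast : ((q : ℤ) + 1) * c = ((q : ℤ) + 1) * (∑ i ∈ Finset.range w, (q : ℤ) ^ i * (-1) ^ (w - 1 - i)) := by
    rw [mul_comm ((q:ℤ)+1) (∑ i ∈ Finset.range w, (q : ℤ) ^ i * (-1) ^ (w - 1 - i)), hgeom]
    exact_mod_cast congrArg (fun x : ℕ => (x : ℤ)) hc.symm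
  have hq1 : ((q : ℤ) + 1) ≠ 0 := by positivity
  have hcS : (c : ℤ) = ∑ i ∈ Finset.range w, (q : ℤ) ^ i * (-1) ^ (w - 1 - i) :=
    mul_left_cancel₀ hq1 hcast
  -- c is odd
  have hcodd : ¬ (2 ∣ c) := by
    intro h2
    have h2' : (2 : ℤ) ∣ (c : ℤ) := by exact_mod_cast h2
    rw [hcS] at h2'
    have hz := (ZMod.intCast_zmod_eq_zero_iff_dvd _ 2).mpr h2'
    push_cast at hz
    have hq2 : ((q : ℕ) : ZMod 2) = 1 := by
      rw [← ZMod.natCast_mod q 2, hq]; norm_num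
    have hneg : (-1 : ZMod 2) = 1 := by decide
    rw [Finset.sum_congr rfl (fun i _ => by rw [hq2, hneg, one_pow, one_pow, one_mul])] at hz
    rw [Finset.sum_const, Finset.card_range, nsmul_eq_mul, mul_one] at hz
    have : (2 : ℕ) ∣ w := (ZMod.natCast_eq_zero_iff w 2).mp hz
    have := Nat.odd_iff.mp hw
    omega
  -- conclude via factorization of the product
  have hc0 : c ≠ 0 := by rintro rfl; simp at hc
  have hq10 : q + 1 ≠ 0 := by omega
  rw [hc, Nat.factorization_mul hq10 hc0]
  simp [Nat.factorization_eq_zero_of_not_dvd hcodd]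

theorem stmt_13 (q w n r : ℕ) (hq : IsPrimePow q) (hw : w.Prime) (hodd : Odd w)
    (hn : 0 < n) (hrad : n.primeFactors.prod id ∣ (q ^ w - 1))
    (h8 : 8 ∣ n) (hq3 : q % 4 = 3)
    (hr : r = min ((n / 2).factorization 2) ((q + 1).factorization 2)) :
    Nat.gcd (n / 2) (q ^ w + 1) = Nat.gcd (n / 2) (q + 1) ∧
    Nat.gcd (n / 2) (q + 1) = 2 ^ r := by
  have hq2 : 2 ≤ q := hq.two_le
  have hqodd : q % 2 = 1 := by omega
  have hqw1 : 1 ≤ q ^ w := Nat.one_le_pow _ _ (by omega)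
  set m := n / 2 with hm
  have hm0 : m ≠ 0 := by
    have : 8 ≤ n := Nat.le_of_dvd hn h8
    simp only [hm]; omega
  -- any prime dividing both n and q^w+1 is 2
  have hkey : ∀ p : ℕ, p.Prime → p ∣ m → p ∣ q ^ w + 1 → p = 2 := by
    intro p hp hpm hpq
    have hpn : p ∣ n := hpm.trans (Nat.div_dvd_of_dvd (dvd_trans (by norm_num) h8))
    have hmem : p ∈ n.primeFactors := Nat.mem_primeFactors.mpr ⟨hp, hpn, hn.ne'⟩
    have hprod : p ∣ n.primeFactors.prod id := Finset.dvd_prod_of_mem id hmem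
    have hp1 : p ∣ q ^ w - 1 := hprod.trans hrad
    have hp2 : p ∣ (q ^ w + 1) - (q ^ w - 1) := Nat.dvd_sub hpq hp1
    have h2 : (q ^ w + 1) - (q ^ w - 1) = 2 := by omega
    rw [h2] at hp2
    exact (Nat.prime_dvd_prime_iff_eq hp Nat.prime_two).mp hp2
  have hdvd : q + 1 ∣ q ^ w + 1 := by
    simpa using Odd.nat_add_dvd_pow_add_pow q 1 hodd
  -- gcd m (q^w+1) is a power of 2
  have hpow : ∀ b : ℕ, b ≠ 0 → b ∣ q ^ w + 1 → ∃ k, Nat.gcd m b = 2 ^ k := by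
    intro b hb0 hbdvd
    have hg0 : Nat.gcd m b ≠ 0 := by
      simp [Nat.gcd_eq_zero_iff, hm0]
    refine ⟨(Nat.gcd m b).primeFactorsList.length, ?_⟩
    refine Nat.eq_prime_pow_of_unique_prime_dvd hg0 ?_
    intro d hd hdg
    exact hkey d hd (hdg.trans (Nat.gcd_dvd_left _ _))
      ((hdg.trans (Nat.gcd_dvd_right _ _)).trans hbdvd)
  obtain ⟨k1, hk1⟩ := hpow (q ^ w + 1) (by omega) dvd_rfl
  obtain ⟨k2, hk2⟩ := hpow (q + 1) (by omega) hdvd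
  -- compute the exponents via factorization of gcd
  have hfact : ∀ (b : ℕ) (hb : b ≠ 0) (k : ℕ), Nat.gcd m b = 2 ^ k →
      k = min (m.factorization 2) (b.factorization 2) := by
    intro b hb k hk
    have := Nat.factorization_gcd hm0 hb
    have h2 := congrArg (fun f => f 2) this
    simp only [Finsupp.inf_apply] at h2
    rw [hk] at h2
    simp only [Nat.Prime.factorization_pow Nat.prime_two, Finsupp.single_eq_same] at h2; exact h2
  have e1 := hfact (q ^ w + 1) (by omega) k1 hk1
  have e2 := hfact (q + 1) (by omega) k2 hk2
  have hval := two_val_pow_add_one hqodd hodd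
  have : k1 = k2 := by rw [e1, e2, hval]
  subst this
  refine ⟨by rw [hk1, hk2], ?_⟩
  rw [hk2, hr, ← e2]
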